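/- Let h : 2^E → ℝ≥0 be a nonnegative submodular function on a finite ground set E, and let S be a random subset of E such that each element of E belongs to S with probability at most q (not necessarily independently). Then E[h(S)] ≥ (1 − q)·h(∅). -/

import Mathlib

open Finset
open scoped Classical

section aux

variable {α : Type} [Fintype α] [DecidableEq α]

omit [Fintype α] in
lemma aux_card_sq (A B : Finset α) (hAB : ¬ A ⊆ B) (hBA : ¬ B ⊆ A) :
    (A.card : ℝ)^2 + (B.card : ℝ)^2 < ((A ∪ B).card : ℝ)^2 + ((A ∩ B).card : ℝ)^2 := by
  have h1 : A ⊂ A ∪ B := by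
    refine Finset.ssubset_iff_subset_ne.mpr ⟨Finset.subset_union_left, ?_⟩
    intro hEq
    exact hBA (by rw [hEq]; exact Finset.subset_union_right)
  have h2 : B ⊂ A ∪ B := by
    refine Finset.ssubset_iff_subset_ne.mpr ⟨Finset.subset_union_right, ?_⟩
    intro hEq
    exact hAB (by rw [hEq]; exact Finset.subset_union_left)
  have c1 : A.card < (A ∪ B).card := Finset.card_lt_card h1
  have c2 : B.card < (A ∪ B).card := Finset.card_lt_card h2
  have c3 : (A ∪ B).card + (A ∩ B).card = A.card + B.card :=
    Finset.card_union_add_card_inter A B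
  have c1' : (A.card : ℝ) < ((A ∪ B).card : ℝ) := by exact_mod_cast c1
  have c2' : (B.card : ℝ) < ((A ∪ B).card : ℝ) := by exact_mod_cast c2
  have c3' : ((A ∪ B).card : ℝ) + ((A ∩ B).card : ℝ) = (A.card : ℝ) + (B.card : ℝ) := by
    exact_mod_cast c3
  nlinarith [c1', c2', c3']

lemma exists_chain_min
    (h : Finset α → ℝ)
    (hsub : ∀ A B : Finset α, h (A ∪ B) + h (A ∩ B) ≤ h A + h B)
    (x : α → ℝ) (p₀ : Finset α → ℝ)
    (h0 : ∀ X, 0 ≤ p₀ X) (h1 : ∑ X, p₀ X = 1)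
    (h2 : ∀ e, (∑ X, if e ∈ X then p₀ X else 0) = x e) :
    ∃ p : Finset α → ℝ, (∀ X, 0 ≤ p X) ∧ (∑ X, p X = 1) ∧
      (∀ e, (∑ X, if e ∈ X then p X else 0) = x e) ∧
      (∑ X, p X * h X ≤ ∑ X, p₀ X * h X) ∧
      (∀ A B : Finset α, p A ≠ 0 → p B ≠ 0 → A ⊆ B ∨ B ⊆ A) := by
  classical
  set K : Set (Finset α → ℝ) :=
    {p | (∀ X, 0 ≤ p X) ∧ (∑ X, p X = 1) ∧ ∀ e, (∑ X, if e ∈ X then p X else 0) = x e} with hKdef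
  have hfc : Continuous (fun p : Finset α → ℝ => ∑ X, p X * h X) :=
    continuous_finset_sum _ fun X _ => (continuous_apply X).mul continuous_const
  have hΦc : Continuous (fun p : Finset α → ℝ => ∑ X, p X * ((X.card : ℝ))^2) :=
    continuous_finset_sum _ fun X _ => (continuous_apply X).mul continuous_const
  have hmc : ∀ e : α, Continuous (fun p : Finset α → ℝ => ∑ X, if e ∈ X then p X else 0) := by
    intro e
    refine continuous_finset_sum _ fun X _ => ?_
    by_cases hx : e ∈ X
    · simpa [hx] using (continuous_apply X)
    · simpa [hx] using (continuous_const : Continuous fun _ : Finset α → ℝ => (0:ℝ))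
  have hKc : IsClosed K := by
    have hK2 : K = (⋂ X : Finset α, {p : Finset α → ℝ | 0 ≤ p X}) ∩
        ({p : Finset α → ℝ | ∑ X, p X = 1} ∩
          ⋂ e : α, {p : Finset α → ℝ | (∑ X, if e ∈ X then p X else 0) = x e}) := by
      ext p
      simp only [hKdef, Set.mem_setOf_eq, Set.mem_inter_iff, Set.mem_iInter]
    rw [hK2]
    refine IsClosed.inter (isClosed_iInter fun X => isClosed_le continuous_const (continuous_apply X))
      (IsClosed.inter ?_ (isClosed_iInter fun e => isClosed_eq (hmc e) continuous_const))
    exact isClosed_eq (continuous_finset_sum _ fun X _ => continuous_apply X) continuous_const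
  have hKsub : K ⊆ Set.univ.pi fun _ : Finset α => Set.Icc (0:ℝ) 1 := by
    intro p hp X _
    refine ⟨hp.1 X, ?_⟩
    have hle := Finset.single_le_sum (fun i (_ : i ∈ Finset.univ) => hp.1 i) (Finset.mem_univ X)
    rw [hp.2.1] at hle
    exact hle
  have hKcpt : IsCompact K :=
    IsCompact.of_isClosed_subset (isCompact_univ_pi fun _ => isCompact_Icc) hKc hKsub
  have hK0 : p₀ ∈ K := ⟨h0, h1, h2⟩
  obtain ⟨pm, hpmK, hpmmin⟩ := hKcpt.exists_isMinOn ⟨p₀, hK0⟩ hfc.continuousOn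
  set K' : Set (Finset α → ℝ) := K ∩ {p | (∑ X, p X * h X) = ∑ X, pm X * h X} with hK'def
  have hK'cpt : IsCompact K' := hKcpt.inter_right (isClosed_eq hfc continuous_const)
  obtain ⟨ps, hpsK', hpsmax⟩ := hK'cpt.exists_isMaxOn ⟨pm, hpmK, rfl⟩ hΦc.continuousOn
  have hpsK : ps ∈ K := hpsK'.1
  refine ⟨ps, hpsK.1, hpsK.2.1, hpsK.2.2, ?_, ?_⟩
  · have hmin := isMinOn_iff.mp hpmmin p₀ hK0
    calc (∑ X, ps X * h X) = ∑ X, pm X * h X := hpsK'.2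
    _ ≤ ∑ X, p₀ X * h X := hmin
  · by_contra hnc
    push_neg at hnc
    obtain ⟨A, B, hA, hB, hAB, hBA⟩ := hnc
    set c := min (ps A) (ps B) with hcdef
    have hc0 : 0 < c := lt_min ((hpsK.1 A).lt_of_ne (Ne.symm hA)) ((hpsK.1 B).lt_of_ne (Ne.symm hB))
    have hcA : c ≤ ps A := min_le_left _ _
    have hcB : c ≤ ps B := min_le_right _ _
    have hne1 : A ∪ B ≠ A := fun hEq => hBA (by rw [← hEq]; exact Finset.subset_union_right)
    have hne2 : A ∪ B ≠ B := fun hEq => hAB (by rw [← hEq]; exact Finset.subset_union_left)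
    have hne3 : A ∩ B ≠ A := fun hEq => hAB (by rw [← hEq]; exact Finset.inter_subset_right)
    have hne4 : A ∩ B ≠ B := fun hEq => hBA (by rw [← hEq]; exact Finset.inter_subset_left)
    have hne5 : A ∪ B ≠ A ∩ B := fun hEq =>
      hne1 (le_antisymm (hEq ▸ Finset.inter_subset_left) Finset.subset_union_left)
    have hne6 : A ≠ B := fun hEq => hAB (le_of_eq hEq)
    set g : Finset α → ℝ := fun X =>
      (if X = A ∪ B then (1:ℝ) else 0) + (if X = A ∩ B then 1 else 0)
        - (if X = A then 1 else 0) - (if X = B then 1 else 0) with hgdef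
    have key : ∀ w : Finset α → ℝ, (∑ X, g X * w X) = w (A ∪ B) + w (A ∩ B) - w A - w B := by
      intro w
      have expand : ∀ X : Finset α, g X * w X =
          (if X = A ∪ B then w X else 0) + (if X = A ∩ B then w X else 0)
            - (if X = A then w X else 0) - (if X = B then w X else 0) := by
        intro X
        simp only [hgdef]
        split_ifs <;> ring
      calc (∑ X, g X * w X)
          = ∑ X, ((if X = A ∪ B then w X else 0) + (if X = A ∩ B then w X else 0)
            - (if X = A then w X else 0) - (if X = B then w X else 0)) :=
            Finset.sum_congr rfl fun X _ => expand X
        _ = w (A ∪ B) + w (A ∩ B) - w A - w B := by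
            rw [Finset.sum_sub_distrib, Finset.sum_sub_distrib, Finset.sum_add_distrib]
            simp [Finset.sum_ite_eq']
    set p' : Finset α → ℝ := fun X => ps X + c * g X with hp'def
    have hsplit : ∀ w : Finset α → ℝ,
        (∑ X, p' X * w X) = (∑ X, ps X * w X) + c * (w (A ∪ B) + w (A ∩ B) - w A - w B) := by
      intro w
      rw [← key w, Finset.mul_sum, ← Finset.sum_add_distrib]
      refine Finset.sum_congr rfl fun X _ => by simp only [hp'def]; ring
    have hp'nonneg : ∀ X, 0 ≤ p' X := by
      intro X
      simp only [hp'def]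
      by_cases e1 : X = A ∪ B
      · have e2 : X ≠ A ∩ B := by rw [e1]; exact hne5
        have e3 : X ≠ A := by rw [e1]; exact hne1
        have e4 : X ≠ B := by rw [e1]; exact hne2
        have hg : g X = 1 := by simp [hgdef, e1, e2, e3, e4, hAB, hBA, hne1, Ne.symm hne1, hne2, Ne.symm hne2, hne3, Ne.symm hne3, hne4, Ne.symm hne4, hne5, Ne.symm hne5, hne6, Ne.symm hne6]
        rw [hg]
        have := hpsK.1 X; linarith
      · by_cases e2 : X = A ∩ B
        · have e3 : X ≠ A := by rw [e2]; exact hne3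
          have e4 : X ≠ B := by rw [e2]; exact hne4
          have hg : g X = 1 := by simp [hgdef, e1, e2, e3, e4, hAB, hBA, hne1, Ne.symm hne1, hne2, Ne.symm hne2, hne3, Ne.symm hne3, hne4, Ne.symm hne4, hne5, Ne.symm hne5, hne6, Ne.symm hne6]
          rw [hg]
          have := hpsK.1 X; linarith
        · by_cases e3 : X = A
          · have e4 : X ≠ B := by rw [e3]; exact hne6
            have hg : g X = -1 := by simp [hgdef, e1, e2, e3, e4, hAB, hBA, hne1, Ne.symm hne1, hne2, Ne.symm hne2, hne3, Ne.symm hne3, hne4, Ne.symm hne4, hne5, Ne.symm hne5, hne6, Ne.symm hne6]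
            rw [hg]
            have hcX : c ≤ ps X := by rw [e3]; exact hcA
            linarith
          · by_cases e4 : X = B
            · have hg : g X = -1 := by simp [hgdef, e1, e2, e3, e4, hAB, hBA, hne1, Ne.symm hne1, hne2, Ne.symm hne2, hne3, Ne.symm hne3, hne4, Ne.symm hne4, hne5, Ne.symm hne5, hne6, Ne.symm hne6]
              rw [hg]
              have hcX : c ≤ ps X := by rw [e4]; exact hcB
              linarith
            · have hg : g X = 0 := by simp [hgdef, e1, e2, e3, e4]
              rw [hg]
              have := hpsK.1 X; linarith
    have hsum' : ∑ X, p' X = 1 := by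
      have hw := hsplit (fun _ => 1)
      simp only [mul_one] at hw
      rw [hw, hpsK.2.1]; ring
    have hmarg' : ∀ e, (∑ X, if e ∈ X then p' X else 0) = x e := by
      intro e
      have hconv : ∀ pf : Finset α → ℝ,
          (∑ X, if e ∈ X then pf X else 0) = ∑ X, pf X * (if e ∈ X then 1 else 0) := by
        intro pf
        refine Finset.sum_congr rfl fun X _ => ?_
        by_cases he : e ∈ X <;> simp [he]
      have hzero : ((if e ∈ A ∪ B then (1:ℝ) else 0) + (if e ∈ A ∩ B then 1 else 0)
          - (if e ∈ A then 1 else 0) - (if e ∈ B then 1 else 0)) = 0 := by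
        by_cases ha : e ∈ A <;> by_cases hb : e ∈ B <;>
          simp [Finset.mem_union, Finset.mem_inter, ha, hb]
      rw [hconv, hsplit (fun X => if e ∈ X then 1 else 0)]
      simp only [hzero, mul_zero, add_zero]
      rw [← hconv, hpsK.2.2 e]
    have hp'K : p' ∈ K := ⟨hp'nonneg, hsum', hmarg'⟩
    have hf' : ∑ X, p' X * h X ≤ ∑ X, ps X * h X := by
      rw [hsplit h]
      have := hsub A B
      nlinarith
    have hp'K' : p' ∈ K' := by
      refine ⟨hp'K, le_antisymm (hf'.trans (le_of_eq hpsK'.2)) (isMinOn_iff.mp hpmmin p' hp'K)⟩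
    have hΦlt : (∑ X, ps X * ((X.card : ℝ))^2) < ∑ X, p' X * ((X.card : ℝ))^2 := by
      rw [hsplit (fun X => ((X.card : ℝ))^2)]
      have := aux_card_sq A B hAB hBA
      nlinarith
    have := isMaxOn_iff.mp hpsmax p' hp'K'
    linarith

end aux

structure FinMatroid (α : Type) [DecidableEq α] where
  E : Finset α
  Indep : Finset α → Prop
  indep_empty : Indep ∅
  subset_ground : ∀ ⦃X⦄, Indep X → X ⊆ E
  indep_mono : ∀ ⦃X Y⦄, X ⊆ Y → Indep Y → Indep X
  indep_exchange : ∀ ⦃X Y⦄, Indep X → Indep Y → X.card < Y.card →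
    ∃ e ∈ Y \ X, Indep (insert e X)

namespace FinMatroid

variable {α : Type} [DecidableEq α]

noncomputable def rank (M : FinMatroid α) (X : Finset α) : ℕ :=
  sSup {n | ∃ Y ⊆ X, M.Indep Y ∧ Y.card = n}

def spn (M : FinMatroid α) (X : Finset α) : Set α :=
  {e | e ∈ M.E ∧ M.rank (insert e X) = M.rank X}

end FinMatroid

theorem stmt11 {α : Type} [Fintype α] [DecidableEq α]
    (h : Finset α → ℝ) (hnn : ∀ A, 0 ≤ h A)
    (hsub : ∀ A B : Finset α, h (A ∪ B) + h (A ∩ B) ≤ h A + h B)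
    (q : ℝ) (hq0 : 0 ≤ q) (hq1 : q ≤ 1)
    (p : PMF (Finset α))
    (hmarg : ∀ e : α, (∑' X : Finset α, if e ∈ X then (p X).toReal else 0) ≤ q) :
    (1 - q) * h ∅ ≤ ∑' X : Finset α, (p X).toReal * h X := by
  classical
  set p₀ : Finset α → ℝ := fun X => (p X).toReal with hp₀def
  have h0 : ∀ X, 0 ≤ p₀ X := fun X => ENNReal.toReal_nonneg
  have h1 : ∑ X, p₀ X = 1 := by
    have ht := p.tsum_coe
    rw [tsum_fintype] at ht
    have h' : (∑ X, p X).toReal = (1 : ENNReal).toReal := by rw [ht]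
    rw [ENNReal.toReal_sum (fun X _ => p.apply_ne_top X)] at h'
    simpa using h'
  set x : α → ℝ := fun e => ∑ X, if e ∈ X then p₀ X else 0 with hxdef
  have h2 : ∀ e, (∑ X, if e ∈ X then p₀ X else 0) = x e := fun e => rfl
  have hxq : ∀ e, x e ≤ q := by
    intro e
    have hm := hmarg e
    rw [tsum_fintype] at hm
    exact hm
  obtain ⟨ps, hs0, hs1, hs2, hsle, hchain⟩ := exists_chain_min h hsub x p₀ h0 h1 h2
  have hps0 : 1 - q ≤ ps ∅ := by
    by_cases hall : ∀ X : Finset α, X ≠ ∅ → ps X = 0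
    · have hone : ∑ X, ps X = ps ∅ :=
        Finset.sum_eq_single ∅ (fun X _ hX => hall X hX) (fun hmem => absurd (Finset.mem_univ ∅) hmem)
      have : ps ∅ = 1 := by rw [← hone, hs1]
      linarith
    · push_neg at hall
      obtain ⟨X₁, hX₁ne, hX₁⟩ := hall
      set T : Finset (Finset α) := Finset.univ.filter (fun X => ps X ≠ 0 ∧ X ≠ ∅) with hTdef
      have hTne : T.Nonempty := ⟨X₁, by simp [hTdef, hX₁, hX₁ne, hX₁ne.ne_empty]⟩
      obtain ⟨C, hCT, hCmin⟩ := T.exists_min_image Finset.card hTne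
      have hCmem := Finset.mem_filter.mp hCT
      obtain ⟨e, he⟩ := Finset.nonempty_iff_ne_empty.mpr hCmem.2.2
      have hCsub : ∀ X ∈ T, C ⊆ X := by
        intro X hX
        have hm := Finset.mem_filter.mp hX
        rcases hchain C X hCmem.2.1 hm.2.1 with hc | hc
        · exact hc
        · have hXC : X = C := Finset.eq_of_subset_of_card_le hc (hCmin X hX)
          rw [hXC]
      have hterm : ∀ X : Finset α,
          ps X = (if e ∈ X then ps X else 0) + (if X = ∅ then ps X else 0) := by
        intro X
        by_cases heX : e ∈ X
        · have hXne : X ≠ ∅ := by rintro rfl; exact absurd heX (Finset.notMem_empty e)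
          simp [heX, hXne]
        · by_cases hXe : X = ∅
          · simp [heX, hXe]
          · have hz : ps X = 0 := by
              by_contra hps
              exact heX (hCsub X (Finset.mem_filter.mpr ⟨Finset.mem_univ X, hps, hXe⟩) he)
            simp [heX, hXe, hz]
      have hsum2 : (1:ℝ) = x e + ps ∅ := by
        calc (1:ℝ) = ∑ X, ps X := hs1.symm
          _ = ∑ X, ((if e ∈ X then ps X else 0) + (if X = ∅ then ps X else 0)) :=
              Finset.sum_congr rfl fun X _ => hterm X
          _ = (∑ X, (if e ∈ X then ps X else 0)) + ∑ X, (if X = ∅ then ps X else 0) :=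
              Finset.sum_add_distrib
          _ = x e + ps ∅ := by rw [hs2 e]; simp [Finset.sum_ite_eq']
      have := hxq e
      linarith
  rw [tsum_fintype]
  have hterm0 : ps ∅ * h ∅ ≤ ∑ X, ps X * h X :=
    Finset.single_le_sum (fun X _ => mul_nonneg (hs0 X) (hnn X)) (Finset.mem_univ ∅)
  have hfinal : (1 - q) * h ∅ ≤ ps ∅ * h ∅ := mul_le_mul_of_nonneg_right hps0 (hnn ∅)
  calc (1 - q) * h ∅ ≤ ps ∅ * h ∅ := hfinal
    _ ≤ ∑ X, ps X * h X := hterm0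
    _ ≤ ∑ X, p₀ X * h X := hsle
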